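/- Let X be a real Banach space such that for every extreme point x* of the closed unit ball of X*, span{x*} is an L-summand of X* (X* = span{x*} ⊕₁ N for some closed subspace N). Then every very smooth point x of X with ‖x‖ = 1 is a QP point of X. -/

import Mathlib

open Filter Topology Metric Set NormedSpace MeasureTheory

noncomputable section

/-- The norm of `X` is Fréchet differentiable at `x`: there is a continuous linear
functional `f` with `lim_{y→0} (‖x+y‖ - ‖x‖ - f y)/‖y‖ = 0`. -/
def FrechetSmoothPoint (X : Type*) [NormedAddCommGroup X] [NormedSpace ℝ X] (x : X) : Prop :=
  ∃ f : X →L[ℝ] ℝ,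
    Tendsto (fun y : X => (‖x + y‖ - ‖x‖ - f y) / ‖y‖) (𝓝[≠] (0 : X)) (𝓝 0)

/-- `x` is a smooth point: it is nonzero and there is exactly one norm-one functional
attaining the norm at `x`. -/
def SmoothPoint (X : Type*) [NormedAddCommGroup X] [NormedSpace ℝ X] (x : X) : Prop :=
  x ≠ 0 ∧ ∃! f : StrongDual ℝ X, ‖f‖ = 1 ∧ f x = ‖x‖

/-- `x` is a very smooth point: it is a smooth point whose canonical image in the bidual
is a smooth point of the bidual. -/
def VerySmoothPoint (X : Type*) [NormedAddCommGroup X] [NormedSpace ℝ X] (x : X) : Prop :=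
  SmoothPoint X x ∧ SmoothPoint (StrongDual ℝ (StrongDual ℝ X)) (inclusionInDoubleDual ℝ X x)

/-- `X = M ⊕_∞ N`: `M, N` are closed subspaces with trivial intersection whose sum is
everything, and `‖m + n‖ = max ‖m‖ ‖n‖` for `m ∈ M`, `n ∈ N`. -/
def MSumDecomp {X : Type*} [NormedAddCommGroup X] [NormedSpace ℝ X]
    (M N : Submodule ℝ X) : Prop :=
  IsClosed (M : Set X) ∧ IsClosed (N : Set X) ∧ M ⊓ N = ⊥ ∧ M ⊔ N = ⊤ ∧
    ∀ m ∈ M, ∀ n ∈ N, ‖m + n‖ = max ‖m‖ ‖n‖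

/-- `X = M ⊕₁ N`: `M, N` are closed subspaces with trivial intersection whose sum is
everything, and `‖m + n‖ = ‖m‖ + ‖n‖` for `m ∈ M`, `n ∈ N`; such `M` is an L-summand. -/
def LSumDecomp {X : Type*} [NormedAddCommGroup X] [NormedSpace ℝ X]
    (M N : Submodule ℝ X) : Prop :=
  IsClosed (M : Set X) ∧ IsClosed (N : Set X) ∧ M ⊓ N = ⊥ ∧ M ⊔ N = ⊤ ∧
    ∀ m ∈ M, ∀ n ∈ N, ‖m + n‖ = ‖m‖ + ‖n‖

/-- The state space `S_x` of a vector `x`. -/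
def StateSpace {X : Type*} [NormedAddCommGroup X] [NormedSpace ℝ X] (x : X) :
    Set (StrongDual ℝ X) :=
  {f : StrongDual ℝ X | ‖f‖ ≤ 1 ∧ f x = 1}

/-- `x` is a quasi-polyhedral (QP) point: for some `δ > 0`, every norm-one `z` with
`‖z - x‖ < δ` has `S_z ⊆ S_x`. -/
def QPPoint (X : Type*) [NormedAddCommGroup X] [NormedSpace ℝ X] (x : X) : Prop :=
  ∃ δ > (0 : ℝ), ∀ z : X, ‖z‖ = 1 → ‖z - x‖ < δ → StateSpace z ⊆ StateSpace x

/-- `X` is an `L¹`-predual space: `X*` is isometrically isomorphic to `L¹(μ)` for some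
(positive) measure `μ`. -/
def IsL1Predual (X : Type*) [NormedAddCommGroup X] [NormedSpace ℝ X] : Prop :=
  ∃ (α : Type) (_ : MeasurableSpace α) (μ : Measure α),
    Nonempty (StrongDual ℝ X ≃ₗᵢ[ℝ] Lp ℝ 1 μ)

section QPAux

variable {Y : Type*} [NormedAddCommGroup Y] [NormedSpace ℝ Y]

/-- difference quotient of the norm at `y` (with `‖y‖ = 1`) in direction `u`. -/
def qpQ (y u : Y) (t : ℝ) : ℝ := (‖y + t • u‖ - 1) / t

/-- one-sided (right) directional derivative of the norm. -/
def qpP (y u : Y) : ℝ := ⨅ t : Set.Ioi (0:ℝ), qpQ y u (t : ℝ)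

lemma qpQ_mono (y u : Y) (hy : ‖y‖ = 1) {s t : ℝ} (hs : 0 < s) (hst : s ≤ t) :
    qpQ y u s ≤ qpQ y u t := by
  have ht : 0 < t := hs.trans_le hst
  have hkey : ‖y + s • u‖ ≤ (1 - s / t) * ‖y‖ + (s / t) * ‖y + t • u‖ := by
    have h1 : y + s • u = (1 - s / t) • y + (s / t) • (y + t • u) := by
      rw [smul_add, smul_smul, div_mul_cancel₀ _ ht.ne']
      module
    rw [h1]
    calc ‖(1 - s / t) • y + (s / t) • (y + t • u)‖
        ≤ ‖(1 - s / t) • y‖ + ‖(s / t) • (y + t • u)‖ := norm_add_le _ _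
      _ = (1 - s / t) * ‖y‖ + (s / t) * ‖y + t • u‖ := by
          rw [norm_smul, norm_smul, Real.norm_eq_abs, Real.norm_eq_abs,
            abs_of_nonneg (div_nonneg hs.le ht.le),
            abs_of_nonneg (sub_nonneg.2 (div_le_one_of_le₀ hst ht.le))]
  rw [hy] at hkey
  rw [qpQ, qpQ, div_le_div_iff₀ hs ht]
  have e : ((1 - s/t) * 1 + s/t * ‖y + t • u‖) * t = t - s + s * ‖y + t • u‖ := by
    field_simp
  have h2 := mul_le_mul_of_nonneg_right hkey ht.le
  rw [e] at h2
  nlinarith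

lemma qpQ_lower (y u : Y) (hy : ‖y‖ = 1) {t : ℝ} (ht : 0 < t) : -‖u‖ ≤ qpQ y u t := by
  have h : ‖y‖ ≤ ‖y + t • u‖ + ‖t • u‖ := by
    have := norm_add_le (y + t • u) (-(t • u))
    simpa using this
  rw [hy, norm_smul, Real.norm_eq_abs, abs_of_pos ht] at h
  rw [qpQ, le_div_iff₀ ht]
  nlinarith

lemma qpP_bddBelow (y u : Y) (hy : ‖y‖ = 1) :
    BddBelow (Set.range fun t : Set.Ioi (0:ℝ) => qpQ y u (t:ℝ)) := by
  refine ⟨-‖u‖, ?_⟩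
  rintro _ ⟨t, rfl⟩
  exact qpQ_lower y u hy t.2

lemma qpP_le (y u : Y) (hy : ‖y‖ = 1) {t : ℝ} (ht : 0 < t) : qpP y u ≤ qpQ y u t :=
  ciInf_le (qpP_bddBelow y u hy) (⟨t, ht⟩ : Set.Ioi (0:ℝ))

lemma le_qpP (y u : Y) {a : ℝ} (h : ∀ t : ℝ, 0 < t → a ≤ qpQ y u t) : a ≤ qpP y u :=
  le_ciInf fun t => h t t.2

lemma exists_qpQ_lt (y u : Y) {a : ℝ} (h : qpP y u < a) : ∃ t : ℝ, 0 < t ∧ qpQ y u t < a := by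
  obtain ⟨t, ht⟩ := exists_lt_of_ciInf_lt h
  exact ⟨t, t.2, ht⟩


lemma qpQ_add_le (y u v : Y) (hy : ‖y‖ = 1) {t : ℝ} (ht : 0 < t) :
    qpQ y (u + v) t ≤ qpQ y u (2 * t) + qpQ y v (2 * t) := by
  have hkey : ‖y + t • (u + v)‖ ≤ (‖y + (2*t) • u‖ + ‖y + (2*t) • v‖) / 2 := by
    have h1 : y + t • (u + v) = (2:ℝ)⁻¹ • ((y + (2*t) • u) + (y + (2*t) • v)) := by
      module
    rw [h1, norm_smul]
    rw [Real.norm_eq_abs, abs_of_pos (by norm_num : (0:ℝ) < (2:ℝ)⁻¹)]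
    have := norm_add_le (y + (2*t) • u) (y + (2*t) • v)
    linarith
  rw [qpQ, qpQ, qpQ, div_add_div _ _ (by positivity : (2*t) ≠ 0) (by positivity : (2*t) ≠ 0),
    div_le_div_iff₀ ht (by positivity)]
  nlinarith [mul_le_mul_of_nonneg_right hkey ht.le, ht.le]

lemma qpP_add (y u v : Y) (hy : ‖y‖ = 1) : qpP y (u + v) ≤ qpP y u + qpP y v := by
  refine le_of_forall_pos_le_add fun ε hε => ?_
  obtain ⟨t₁, ht₁, h1⟩ := exists_qpQ_lt y u (show qpP y u < qpP y u + ε/2 by linarith)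
  obtain ⟨t₂, ht₂, h2⟩ := exists_qpQ_lt y v (show qpP y v < qpP y v + ε/2 by linarith)
  set t := min t₁ t₂ / 2 with htdef
  have ht : 0 < t := by positivity
  have h2t₁ : 2 * t ≤ t₁ := by
    have := min_le_left t₁ t₂; rw [htdef]; linarith
  have h2t₂ : 2 * t ≤ t₂ := by
    have := min_le_right t₁ t₂; rw [htdef]; linarith
  calc qpP y (u + v) ≤ qpQ y (u + v) t := qpP_le y _ hy ht
    _ ≤ qpQ y u (2*t) + qpQ y v (2*t) := qpQ_add_le y u v hy ht
    _ ≤ qpQ y u t₁ + qpQ y v t₂ :=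
        add_le_add (qpQ_mono y u hy (by positivity) h2t₁) (qpQ_mono y v hy (by positivity) h2t₂)
    _ ≤ qpP y u + qpP y v + ε := by linarith

lemma qpP_zero (y : Y) (hy : ‖y‖ = 1) : qpP y 0 = 0 := by
  have h : ∀ t : ℝ, qpQ y 0 t = 0 := by
    intro t; simp [qpQ, hy]
  rw [qpP]
  simp only [h]
  exact ciInf_const

lemma qpP_smul_le (y u : Y) (hy : ‖y‖ = 1) {c : ℝ} (hc : 0 < c) : qpP y (c • u) ≤ c * qpP y u := by
  refine le_of_forall_pos_le_add fun ε hε => ?_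
  obtain ⟨t, ht, h1⟩ := exists_qpQ_lt y u (show qpP y u < qpP y u + ε/c by
    have := div_pos hε hc; linarith)
  have hq : qpQ y (c • u) (t / c) = c * qpQ y u t := by
    rw [qpQ, qpQ]
    have : (t / c) • (c • u) = t • u := by
      rw [smul_smul, div_mul_cancel₀ _ hc.ne']
    rw [this]
    field_simp
  calc qpP y (c • u) ≤ qpQ y (c • u) (t / c) := qpP_le y _ hy (by positivity)
    _ = c * qpQ y u t := hq
    _ ≤ c * qpP y u + ε := by
        have := mul_le_mul_of_nonneg_left h1.le hc.le
        rw [mul_add, mul_div_cancel₀ _ hc.ne'] at this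
        linarith

lemma qpP_smul (y u : Y) (hy : ‖y‖ = 1) {c : ℝ} (hc : 0 < c) : qpP y (c • u) = c * qpP y u := by
  refine le_antisymm (qpP_smul_le y u hy hc) ?_
  have h := qpP_smul_le y (c • u) hy (inv_pos.2 hc)
  rw [smul_smul, inv_mul_cancel₀ hc.ne', one_smul] at h
  calc c * qpP y u ≤ c * (c⁻¹ * qpP y (c • u)) := by
        exact mul_le_mul_of_nonneg_left h hc.le
    _ = qpP y (c • u) := by field_simp


lemma le_qpP_of_norming (y u : Y) (hy : ‖y‖ = 1) (ψ : Y →L[ℝ] ℝ)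
    (hψn : ‖ψ‖ ≤ 1) (hψy : ψ y = 1) : ψ u ≤ qpP y u := by
  refine le_qpP y u fun t ht => ?_
  have h : ψ (y + t • u) ≤ ‖y + t • u‖ := by
    calc ψ (y + t • u) ≤ ‖ψ (y + t • u)‖ := le_abs_self _
      _ ≤ ‖ψ‖ * ‖y + t • u‖ := ψ.le_opNorm _
      _ ≤ 1 * ‖y + t • u‖ := by
          exact mul_le_mul_of_nonneg_right hψn (norm_nonneg _)
      _ = ‖y + t • u‖ := one_mul _
  rw [map_add, _root_.map_smul, hψy, smul_eq_mul] at h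
  rw [qpQ, le_div_iff₀ ht]
  linarith

/-- Hahn-Banach: the one-sided derivative of the norm is attained by a norming functional. -/
lemma exists_norming_eq_qpP (y : Y) (hy : ‖y‖ = 1) (u : Y) :
    ∃ ψ : Y →L[ℝ] ℝ, ‖ψ‖ = 1 ∧ ψ y = 1 ∧ ψ u = qpP y u := by
  have hy0 : y ≠ 0 := by intro h; rw [h, norm_zero] at hy; norm_num at hy
  by_cases hu : u = 0
  · obtain ⟨ψ, hψn, hψy⟩ := exists_dual_vector ℝ y (norm_ne_zero_iff.2 hy0)
    refine ⟨ψ, hψn, ?_, ?_⟩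
    · rw [hψy, hy]; norm_num
    · rw [hu, map_zero, qpP_zero y hy]
  · -- Hahn-Banach extension from span {u}
    have H : ∀ c : ℝ, c • u = 0 → c • qpP y u = 0 := by
      intro c hc
      rcases smul_eq_zero.1 hc with h | h
      · rw [h, zero_smul]
      · exact absurd h hu
    set f : Y →ₗ.[ℝ] ℝ := LinearPMap.mkSpanSingleton' u (qpP y u) H with hf
    have hfle : ∀ z : f.domain, f z ≤ qpP y (z : Y) := by
      rintro ⟨z, hz⟩
      have hz' : z ∈ Submodule.span ℝ {u} := by
        rw [hf, LinearPMap.domain_mkSpanSingleton] at hz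
        exact hz
      obtain ⟨c, rfl⟩ := Submodule.mem_span_singleton.1 hz'
      show (LinearPMap.mkSpanSingleton' u (qpP y u) H) ⟨c • u, hz⟩ ≤ qpP y (c • u)
      rw [LinearPMap.mkSpanSingleton'_apply]
      rcases lt_trichotomy c 0 with hc | hc | hc
      · have hsub := qpP_add y (c • u) ((-c) • u) hy
        have : c • u + (-c) • u = 0 := by module
        rw [this, qpP_zero y hy, qpP_smul y u hy (by linarith : (0:ℝ) < -c)] at hsub
        simp only [smul_eq_mul, RingHom.id_apply]
        linarith
      · subst hc; simp [qpP_zero y hy]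
      · rw [qpP_smul y u hy hc]; simp [smul_eq_mul]
    obtain ⟨g, hg1, hg2⟩ := exists_extension_of_le_sublinear f (qpP y)
      (fun c hc v => qpP_smul y v hy hc) (fun v w => qpP_add y v w hy) hfle
    have hgb : ∀ v : Y, |g v| ≤ ‖v‖ := by
      intro v
      have h1 : g v ≤ ‖v‖ := by
        refine (hg2 v).trans ((qpP_le y v hy one_pos).trans ?_)
        rw [qpQ]
        have := norm_add_le y (1 • v)
        rw [one_smul] at this ⊢
        rw [hy] at this
        simpa using by linarith
      have h2 : -g v ≤ ‖v‖ := by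
        have ha : g (-v) ≤ qpP y (-v) := hg2 (-v)
        have hb' : qpP y (-v) ≤ qpQ y (-v) 1 := qpP_le y (-v) hy one_pos
        have hc : qpQ y (-v) 1 ≤ ‖v‖ := by
          rw [qpQ, one_smul]
          have := norm_add_le y (-v)
          rw [hy, norm_neg] at this
          simpa using by linarith
        rw [map_neg] at ha
        linarith
      exact abs_le.2 ⟨by linarith, h1⟩
    set ψ : Y →L[ℝ] ℝ := LinearMap.mkContinuous g 1 (fun v => by
      rw [one_mul]; exact (hgb v).trans_eq rfl) with hψ
    have hψapp : ∀ v, ψ v = g v := fun v => rfl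
    have hψn : ‖ψ‖ ≤ 1 := LinearMap.mkContinuous_norm_le g zero_le_one _
    have hψy : ψ y = 1 := by
      have hup : ψ y ≤ 1 := by
        calc ψ y ≤ |ψ y| := le_abs_self _
          _ ≤ ‖ψ‖ * ‖y‖ := ψ.le_opNorm y
          _ ≤ 1 := by rw [hy, mul_one]; exact hψn
      have hlow : 1 ≤ ψ y := by
        have h := (hg2 (-y)).trans_eq rfl
        have h2 : qpP y (-y) ≤ -1 := by
          refine (qpP_le y (-y) hy one_pos).trans ?_
          rw [qpQ, one_smul]
          simp
        have : g (-y) ≤ -1 := (hg2 (-y)).trans h2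
        rw [map_neg] at this
        rw [hψapp]
        linarith
      linarith
    have hψn1 : ‖ψ‖ = 1 := by
      refine le_antisymm hψn ?_
      have := ψ.le_opNorm y
      rw [hy, mul_one, hψy] at this
      exact le_trans (by norm_num) (le_trans (le_abs_self 1) this)
    have hψu : ψ u = qpP y u := by
      have hmem : u ∈ f.domain := by
        rw [hf, LinearPMap.domain_mkSpanSingleton]
        exact Submodule.mem_span_singleton_self u
      have h5 : f ⟨u, hmem⟩ = qpP y u :=
        LinearPMap.mkSpanSingleton'_apply_self u (qpP y u) H _
      rw [hψapp]
      exact (hg1 ⟨u, hmem⟩).trans h5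
    exact ⟨ψ, hψn1, hψy, hψu⟩

/-- For a smooth point, the one-sided derivative equals the unique norming functional. -/
lemma qpP_eq_of_smooth (y : Y) (hy : ‖y‖ = 1) (φ : Y →L[ℝ] ℝ)
    (huniq : ∀ ψ : Y →L[ℝ] ℝ, ‖ψ‖ = 1 → ψ y = 1 → ψ = φ) (u : Y) :
    qpP y u = φ u := by
  obtain ⟨ψ, h1, h2, h3⟩ := exists_norming_eq_qpP y hy u
  rw [← h3, huniq ψ h1 h2]

/-- Šmulyan-type lemma: at a smooth point, any norming sequence converges weak-star to
the unique norming functional. -/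
lemma smulyan_weak_star (y : Y) (hy : ‖y‖ = 1) (φ : Y →L[ℝ] ℝ)
    (huniq : ∀ ψ : Y →L[ℝ] ℝ, ‖ψ‖ = 1 → ψ y = 1 → ψ = φ)
    (g : ℕ → Y →L[ℝ] ℝ) (hg : ∀ n, ‖g n‖ ≤ 1)
    (hgy : Tendsto (fun n => g n y) atTop (𝓝 1)) (u : Y) :
    Tendsto (fun n => g n u) atTop (𝓝 (φ u)) := by
  rw [Metric.tendsto_atTop]
  intro ε hε
  have h1 : qpP y u < φ u + ε/2 := by
    rw [qpP_eq_of_smooth y hy φ huniq u]; linarith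
  have h2 : qpP y (-u) < φ (-u) + ε/2 := by
    rw [qpP_eq_of_smooth y hy φ huniq (-u)]; linarith
  obtain ⟨t₁, ht₁, hq1⟩ := exists_qpQ_lt y u h1
  obtain ⟨t₂, ht₂, hq2⟩ := exists_qpQ_lt y (-u) h2
  have hev : ∀ᶠ n in atTop, g n y > 1 - t₁ * (ε/2) ∧ g n y > 1 - t₂ * (ε/2) := by
    have l1 : (1 : ℝ) - t₁ * (ε/2) < 1 := by nlinarith
    have l2 : (1 : ℝ) - t₂ * (ε/2) < 1 := by nlinarith
    filter_upwards [hgy.eventually (eventually_gt_nhds l1),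
      hgy.eventually (eventually_gt_nhds l2)] with n hn1 hn2
    exact ⟨hn1, hn2⟩
  rw [eventually_atTop] at hev
  obtain ⟨N, hN⟩ := hev
  refine ⟨N, fun n hn => ?_⟩
  obtain ⟨hb1, hb2⟩ := hN n hn
  have key : ∀ (v : Y) (t : ℝ), 0 < t → ∀ b : ℝ, g n y > 1 - t * b →
      g n v ≤ qpQ y v t + b := by
    intro v t ht b hb
    have h : g n (y + t • v) ≤ ‖y + t • v‖ := by
      calc g n (y + t • v) ≤ |g n (y + t • v)| := le_abs_self _
        _ ≤ ‖g n‖ * ‖y + t • v‖ := (g n).le_opNorm _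
        _ ≤ 1 * ‖y + t • v‖ := mul_le_mul_of_nonneg_right (hg n) (norm_nonneg _)
        _ = ‖y + t • v‖ := one_mul _
    rw [map_add, _root_.map_smul, smul_eq_mul] at h
    rw [qpQ]
    rw [div_add' _ _ _ ht.ne']
    rw [le_div_iff₀ ht]
    nlinarith [h, hb]
  have hup : g n u < φ u + ε := by
    have := key u t₁ ht₁ (ε/2) hb1
    linarith [hq1]
  have hlow : φ u - ε < g n u := by
    have := key (-u) t₂ ht₂ (ε/2) hb2
    rw [map_neg] at this
    have h3 : -(g n u) < φ (-u) + ε := by linarith [hq2]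
    rw [map_neg] at h3
    linarith
  rw [Real.dist_eq, abs_sub_lt_iff]
  constructor <;> linarith [hε, hup, hlow]


/-- Coefficient functional of an L-summand spanned by a norm-one vector. -/
lemma exists_coeff_functional {W : Type*} [NormedAddCommGroup W] [NormedSpace ℝ W]
    (f : W) (hf : ‖f‖ = 1) (N : Submodule ℝ W)
    (hinf : Submodule.span ℝ {f} ⊓ N = ⊥) (hsup : Submodule.span ℝ {f} ⊔ N = ⊤)
    (hnorm : ∀ m ∈ Submodule.span ℝ {f}, ∀ n ∈ N, ‖m + n‖ = ‖m‖ + ‖n‖) :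
    ∃ τ : W →L[ℝ] ℝ, τ f = 1 ∧ (∀ w ∈ N, τ w = 0) ∧ (∀ w : W, w - τ w • f ∈ N) ∧
      (∀ w : W, ‖w‖ = |τ w| + ‖w - τ w • f‖) := by
  have hf0 : f ≠ 0 := by intro h; rw [h, norm_zero] at hf; norm_num at hf
  have hex : ∀ w : W, ∃ c : ℝ, w - c • f ∈ N := by
    intro w
    have hw : w ∈ Submodule.span ℝ {f} ⊔ N := by rw [hsup]; trivial
    obtain ⟨m, hm, n, hn, hmn⟩ := Submodule.mem_sup.1 hw
    obtain ⟨c, rfl⟩ := Submodule.mem_span_singleton.1 hm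
    exact ⟨c, by rwa [← hmn, add_sub_cancel_left]⟩
  have huniq : ∀ (w : W) (c₁ c₂ : ℝ), w - c₁ • f ∈ N → w - c₂ • f ∈ N → c₁ = c₂ := by
    intro w c₁ c₂ h1 h2
    have hd : (c₁ - c₂) • f ∈ N := by
      have := N.sub_mem h2 h1
      have he : w - c₂ • f - (w - c₁ • f) = (c₁ - c₂) • f := by module
      rwa [he] at this
    have hs : (c₁ - c₂) • f ∈ Submodule.span ℝ {f} :=
      Submodule.smul_mem _ _ (Submodule.mem_span_singleton_self f)
    have h0 : (c₁ - c₂) • f ∈ (⊥ : Submodule ℝ W) := hinf ▸ Submodule.mem_inf.2 ⟨hs, hd⟩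
    rw [Submodule.mem_bot, smul_eq_zero] at h0
    rcases h0 with h | h
    · linarith [sub_eq_zero.1 (by linarith [h] : c₁ - c₂ = 0)]
    · exact absurd h hf0
  choose c hc using hex
  have hadd : ∀ w₁ w₂ : W, c (w₁ + w₂) = c w₁ + c w₂ := by
    intro w₁ w₂
    refine huniq (w₁ + w₂) _ _ (hc _) ?_
    have he : w₁ + w₂ - (c w₁ + c w₂) • f = (w₁ - c w₁ • f) + (w₂ - c w₂ • f) := by module
    rw [he]; exact N.add_mem (hc _) (hc _)
  have hsmul : ∀ (a : ℝ) (w : W), c (a • w) = a * c w := by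
    intro a w
    refine huniq (a • w) _ _ (hc _) ?_
    have he : a • w - (a * c w) • f = a • (w - c w • f) := by module
    rw [he]; exact N.smul_mem _ (hc _)
  have hnrm : ∀ w : W, ‖w‖ = |c w| + ‖w - c w • f‖ := by
    intro w
    have he : w = c w • f + (w - c w • f) := by module
    calc ‖w‖ = ‖c w • f + (w - c w • f)‖ := by rw [← he]
      _ = ‖c w • f‖ + ‖w - c w • f‖ := hnorm _
          (Submodule.smul_mem _ _ (Submodule.mem_span_singleton_self f)) _ (hc w)
      _ = |c w| + ‖w - c w • f‖ := by rw [norm_smul, Real.norm_eq_abs, hf, mul_one]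
  have hbound : ∀ w : W, |c w| ≤ ‖w‖ := by
    intro w
    have := hnrm w
    have := norm_nonneg (w - c w • f)
    linarith
  set L : W →ₗ[ℝ] ℝ :=
    { toFun := c
      map_add' := hadd
      map_smul' := fun a w => by simpa using hsmul a w } with hL
  set τ : W →L[ℝ] ℝ := L.mkContinuous 1 (fun w => by
    rw [one_mul]; exact hbound w) with hτ
  have hτapp : ∀ w, τ w = c w := fun w => rfl
  have hτf : τ f = 1 := by
    rw [hτapp]
    refine huniq f _ 1 (hc f) ?_
    rw [one_smul, sub_self]; exact N.zero_mem
  refine ⟨τ, hτf, ?_, ?_, ?_⟩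
  · intro w hw
    rw [hτapp]
    refine huniq w _ 0 (hc w) ?_
    rw [zero_smul, sub_zero]; exact hw
  · intro w; simp only [hτapp]; exact hc w
  · intro w; simp only [hτapp]; exact hnrm w

/-- The unique norming functional of a norm-one smooth point is an extreme point of the
dual ball. -/
lemma norming_extreme {X : Type*} [NormedAddCommGroup X] [NormedSpace ℝ X]
    (x : X) (hx1 : ‖x‖ = 1) (f : X →L[ℝ] ℝ) (hfn : ‖f‖ = 1) (hfx : f x = 1)
    (huniq : ∀ ψ : X →L[ℝ] ℝ, ‖ψ‖ = 1 → ψ x = 1 → ψ = f) :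
    f ∈ Set.extremePoints ℝ (Metric.closedBall (0 : X →L[ℝ] ℝ) 1) := by
  rw [mem_extremePoints]
  constructor
  · rw [mem_closedBall_zero_iff, hfn]
  · intro g hg h hh hseg
    rw [openSegment] at hseg
    obtain ⟨a, b, ha, hb, hab, habf⟩ := hseg
    rw [mem_closedBall_zero_iff] at hg hh
    have hgx : g x ≤ 1 := by
      calc g x ≤ |g x| := le_abs_self _
        _ ≤ ‖g‖ * ‖x‖ := g.le_opNorm x
        _ ≤ 1 := by rw [hx1, mul_one]; exact hg
    have hhx : h x ≤ 1 := by
      calc h x ≤ |h x| := le_abs_self _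
        _ ≤ ‖h‖ * ‖x‖ := h.le_opNorm x
        _ ≤ 1 := by rw [hx1, mul_one]; exact hh
    have happ : a * g x + b * h x = 1 := by
      have := congrArg (fun ψ : X →L[ℝ] ℝ => ψ x) habf
      simpa [hfx] using this
    have hgx1 : g x = 1 := by nlinarith
    have hhx1 : h x = 1 := by nlinarith
    have hgn : ‖g‖ = 1 := by
      refine le_antisymm hg ?_
      calc (1:ℝ) = g x := hgx1.symm
        _ ≤ |g x| := le_abs_self _
        _ ≤ ‖g‖ * ‖x‖ := g.le_opNorm x
        _ = ‖g‖ := by rw [hx1, mul_one]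
    have hhn : ‖h‖ = 1 := by
      refine le_antisymm hh ?_
      calc (1:ℝ) = h x := hhx1.symm
        _ ≤ |h x| := le_abs_self _
        _ ≤ ‖h‖ * ‖x‖ := h.le_opNorm x
        _ = ‖h‖ := by rw [hx1, mul_one]
    exact ⟨huniq g hgn hgx1, huniq h hhn hhx1⟩

end QPAux

set_option maxHeartbeats 1600000 in
set_option synthInstance.maxHeartbeats 400000 in
theorem qp_point_of_very_smooth_of_extreme_L_summands
    {X : Type*} [NormedAddCommGroup X] [NormedSpace ℝ X] [CompleteSpace X]
    (hL : ∀ f ∈ Set.extremePoints ℝ (closedBall (0 : StrongDual ℝ X) 1),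
      ∃ N : Submodule ℝ (StrongDual ℝ X), LSumDecomp (Submodule.span ℝ {f}) N)
    (x : X) (hx1 : ‖x‖ = 1) (hx : VerySmoothPoint X x) :
    QPPoint X x := by
  classical
  obtain ⟨⟨hx0, hsm⟩, hvsm⟩ := hx
  obtain ⟨f, ⟨hfn, hfx⟩, hfu⟩ := hsm
  rw [hx1] at hfx
  have huniqX : ∀ ψ : StrongDual ℝ X, ‖ψ‖ = 1 → ψ x = 1 → ψ = f := fun ψ h1 h2 =>
    hfu ψ ⟨h1, by rw [h2, hx1]⟩
  -- the bidual setting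
  set y : StrongDual ℝ (StrongDual ℝ X) := inclusionInDoubleDual ℝ X x with hy_def
  have hy1 : ‖y‖ = 1 := by
    rw [hy_def]
    rw [show inclusionInDoubleDual ℝ X x = inclusionInDoubleDualLi ℝ (E := X) x from rfl,
      (inclusionInDoubleDualLi ℝ (E := X)).norm_map, hx1]
  set J :=
    inclusionInDoubleDual ℝ (StrongDual ℝ X) with hJ_def
  have hJnorm : ∀ ψ : StrongDual ℝ X, ‖J ψ‖ = ‖ψ‖ := fun ψ => by
    rw [hJ_def]
    rw [show inclusionInDoubleDual ℝ (StrongDual ℝ X) ψ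
        = inclusionInDoubleDualLi ℝ (E := StrongDual ℝ X) ψ from rfl,
      (inclusionInDoubleDualLi ℝ (E := StrongDual ℝ X)).norm_map]
  have hJapp : ∀ (ψ : StrongDual ℝ X) (u : StrongDual ℝ (StrongDual ℝ X)), J ψ u = u ψ := fun ψ u => rfl
  have hyapp : ∀ ψ : StrongDual ℝ X, y ψ = ψ x := fun ψ => rfl
  -- unique norming functional of y is J f
  obtain ⟨Φ, ⟨hΦn, hΦy⟩, hΦu⟩ := hvsm.2
  have hJf : Φ = J f := by
    refine (hΦu (J f) ⟨?_, ?_⟩).symm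
    · rw [hJnorm, hfn]
    · rw [hJapp, hyapp, hfx, hy1]
  have huniqY : ∀ ψ, ‖ψ‖ = 1 → ψ y = 1 → ψ = J f := by
    intro ψ h1 h2
    rw [← hJf]
    exact hΦu ψ ⟨h1, by rw [h2, hy1]⟩
  -- f is extreme, get the L-summand and the coefficient functional τ
  have hfext : f ∈ Set.extremePoints ℝ (closedBall (0 : StrongDual ℝ X) 1) :=
    norming_extreme x hx1 f hfn hfx huniqX
  obtain ⟨N, hNc1, hNc2, hNinf, hNsup, hNnorm⟩ := hL f hfext
  obtain ⟨τ, hτf, hτN, hτmem, hτnorm⟩ := exists_coeff_functional f hfn N hNinf hNsup hNnorm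
  -- weak convergence principle
  have hweak : ∀ g : ℕ → StrongDual ℝ X, (∀ n, ‖g n‖ ≤ 1) →
      Tendsto (fun n => g n x) atTop (𝓝 1) →
      Tendsto (fun n => τ (g n)) atTop (𝓝 1) := by
    intro g hg hgx
    have := smulyan_weak_star y hy1 (J f) huniqY (fun n => J (g n))
      (fun n => by rw [hJnorm]; exact hg n)
      (by
        have : ∀ n, J (g n) y = g n x := fun n => by rw [hJapp, hyapp]
        simpa only [this] using hgx) τ
    have hτ1 : J f τ = 1 := by rw [hJapp, hτf]
    rw [hτ1] at this
    have happ : ∀ n, J (g n) τ = τ (g n) := fun n => by rw [hJapp]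
    simpa only [happ] using this
  -- main contradiction argument
  by_contra hQP
  rw [QPPoint] at hQP
  push_neg at hQP
  have hseq : ∀ n : ℕ, ∃ z : X, ∃ g : StrongDual ℝ X,
      ‖z‖ = 1 ∧ ‖z - x‖ < 1/(n+1) ∧ ‖g‖ ≤ 1 ∧ g z = 1 ∧ g x ≠ 1 := by
    intro n
    obtain ⟨z, hz1, hz2, hz3⟩ := hQP (1/(n+1)) (by positivity)
    obtain ⟨g, hg1, hg2⟩ := Set.not_subset.1 hz3
    obtain ⟨hgn, hgz⟩ := hg1
    refine ⟨z, g, hz1, hz2, hgn, hgz, ?_⟩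
    intro h
    exact hg2 ⟨hgn, h⟩
  choose z g hz1 hz2 hgn hgz hgx using hseq
  have hone : ∀ n : ℕ, (1:ℝ)/(n+1) > 0 := fun n => by positivity
  have hginvbd : ∀ (n : ℕ) (w : X), |g n w| ≤ ‖w‖ := by
    intro n w
    calc |g n w| ≤ ‖g n‖ * ‖w‖ := (g n).le_opNorm w
      _ ≤ 1 * ‖w‖ := mul_le_mul_of_nonneg_right (hgn n) (norm_nonneg _)
      _ = ‖w‖ := one_mul _
  have hlow : ∀ n : ℕ, 1 - 1/(n+1) ≤ g n x := by
    intro n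
    have h1 : g n x = g n (z n) + g n (x - z n) := by
      rw [← map_add]
      congr 1
      abel
    have h2 : |g n (x - z n)| ≤ ‖x - z n‖ := hginvbd n _
    have h3 : ‖x - z n‖ < 1/(n+1) := by rw [← norm_neg]; simpa [neg_sub] using hz2 n
    rw [h1, hgz n]
    have := abs_le.1 h2
    linarith
  have hub : ∀ n : ℕ, g n x ≤ 1 := by
    intro n
    have := hginvbd n x
    rw [hx1] at this
    linarith [le_abs_self (g n x)]
  have hauxlim : Tendsto (fun n : ℕ => 1 - 1/((n:ℝ)+1)) atTop (𝓝 1) := by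
    have h : Tendsto (fun n : ℕ => 1 / ((n:ℝ) + 1)) atTop (𝓝 0) :=
      tendsto_one_div_add_atTop_nhds_zero_nat
    have := (tendsto_const_nhds : Tendsto (fun _ : ℕ => (1:ℝ)) atTop (𝓝 1)).sub h
    simpa using this
  have hgx1 : Tendsto (fun n => g n x) atTop (𝓝 1) := by
    refine tendsto_of_tendsto_of_tendsto_of_le_of_le hauxlim tendsto_const_nhds ?_ ?_
    · intro n; exact hlow n
    · intro n; exact hub n
  have htend : Tendsto (fun n => τ (g n)) atTop (𝓝 1) := hweak g hgn hgx1
  -- norms of g n equal 1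
  have hgnorm1 : ∀ n, ‖g n‖ = 1 := by
    intro n
    refine le_antisymm (hgn n) ?_
    calc (1:ℝ) = g n (z n) := (hgz n).symm
      _ ≤ |g n (z n)| := le_abs_self _
      _ ≤ ‖g n‖ * ‖z n‖ := (g n).le_opNorm _
      _ = ‖g n‖ := by rw [hz1 n, mul_one]
  -- decomposition pieces
  set t : ℕ → ℝ := fun n => τ (g n) with ht_def
  set m : ℕ → StrongDual ℝ X := fun n => g n - τ (g n) • f with hm_def
  have hmN : ∀ n, m n ∈ N := fun n => hτmem (g n)
  have hnrm : ∀ n, |t n| + ‖m n‖ = 1 := by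
    intro n
    have := hτnorm (g n)
    rw [hgnorm1 n] at this
    exact this.symm
  -- eventually t n > 1/2
  have hev : ∀ᶠ n in atTop, t n > 1/2 := by
    refine htend.eventually (eventually_gt_nhds (by norm_num))
  rw [eventually_atTop] at hev
  obtain ⟨N₀, hN₀⟩ := hev
  by_cases hcase : ∃ n ≥ N₀, m n = 0
  · obtain ⟨n, hn, hmn⟩ := hcase
    have h1 : |t n| = 1 := by
      have := hnrm n
      rw [hmn, norm_zero] at this
      linarith
    have ht1 : t n = 1 := by
      have := hN₀ n hn
      rcases abs_cases (t n) with ⟨h, _⟩ | ⟨h, _⟩ <;> linarith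
    have hgf : g n = f := by
      have : g n - τ (g n) • f = 0 := hmn
      have h2 : τ (g n) = 1 := ht1
      rw [h2, one_smul, sub_eq_zero] at this
      exact this
    exact hgx n (by rw [hgf, hfx])
  · push_neg at hcase
    set u : ℕ → StrongDual ℝ X := fun n => ‖m n‖⁻¹ • m n with hu_def
    have hmpos : ∀ n ≥ N₀, 0 < ‖m n‖ := by
      intro n hn
      rw [norm_pos_iff]
      exact hcase n hn
    have hun : ∀ n, ‖u n‖ ≤ 1 := by
      intro n
      simp only [hu_def]
      by_cases h : m n = 0
      · rw [h]; simp
      · have hpos : 0 < ‖m n‖ := by rw [norm_pos_iff]; exact h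
        rw [norm_smul, Real.norm_eq_abs, abs_of_pos (inv_pos.2 hpos),
          inv_mul_cancel₀ hpos.ne']
    have hmlow : ∀ n ≥ N₀, ‖m n‖ ≤ m n (z n) := by
      intro n hn
      have hfz : f (z n) ≤ 1 := by
        have : |f (z n)| ≤ ‖f‖ * ‖z n‖ := f.le_opNorm _
        rw [hfn, hz1 n, one_mul] at this
        linarith [le_abs_self (f (z n))]
      have htpos : 0 < t n := lt_trans (by norm_num) (hN₀ n hn)
      have hmz : m n (z n) = 1 - t n * f (z n) := by
        simp only [hm_def]
        simp only [ContinuousLinearMap.sub_apply, ContinuousLinearMap.smul_apply,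
          smul_eq_mul, hgz n]
        rfl
      have hmn1 : ‖m n‖ = 1 - t n := by
        have h1 := hnrm n
        have h2 : |t n| = t n := abs_of_pos htpos
        rw [h2] at h1
        linarith
      rw [hmz, hmn1]
      nlinarith
    have hulow : ∀ n ≥ N₀, 1 - 1/(n+1) ≤ u n x := by
      intro n hn
      have h1 : (1:ℝ) ≤ u n (z n) := by
        simp only [hu_def]
        rw [ContinuousLinearMap.smul_apply, smul_eq_mul]
        calc (1:ℝ) = ‖m n‖⁻¹ * ‖m n‖ := (inv_mul_cancel₀ (hmpos n hn).ne').symm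
          _ ≤ ‖m n‖⁻¹ * m n (z n) :=
              mul_le_mul_of_nonneg_left (hmlow n hn) (inv_pos.2 (hmpos n hn)).le
      have h2 : u n x = u n (z n) + u n (x - z n) := by
        rw [← map_add]; congr 1; abel
      have h3 : |u n (x - z n)| ≤ ‖x - z n‖ := by
        calc |u n (x - z n)| ≤ ‖u n‖ * ‖x - z n‖ := (u n).le_opNorm _
          _ ≤ 1 * ‖x - z n‖ := mul_le_mul_of_nonneg_right (hun n) (norm_nonneg _)
          _ = ‖x - z n‖ := one_mul _
      have h4 : ‖x - z n‖ < 1/(n+1) := by rw [← norm_neg]; simpa [neg_sub] using hz2 n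
      have := abs_le.1 h3
      rw [h2]
      linarith
    have huub : ∀ n, u n x ≤ 1 := by
      intro n
      have : |u n x| ≤ ‖u n‖ * ‖x‖ := (u n).le_opNorm _
      rw [hx1, mul_one] at this
      linarith [le_abs_self (u n x), hun n, this]
    have hux : Tendsto (fun n => u n x) atTop (𝓝 1) := by
      rw [Metric.tendsto_atTop]
      intro ε hε
      obtain ⟨N₁, hN₁⟩ := Metric.tendsto_atTop.1 hauxlim ε hε
      refine ⟨max N₀ N₁, fun n hn => ?_⟩
      have hn0 : N₀ ≤ n := le_trans (le_max_left _ _) hn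
      have hn1 : N₁ ≤ n := le_trans (le_max_right _ _) hn
      have := hN₁ n hn1
      rw [Real.dist_eq] at this ⊢
      have hl := hulow n hn0
      have hu' := huub n
      rw [abs_sub_lt_iff] at this ⊢
      constructor <;> [linarith [this.1, this.2]; linarith [this.1, this.2]]
    have hτu : Tendsto (fun n => τ (u n)) atTop (𝓝 1) := hweak u hun hux
    have hτu0 : ∀ n, τ (u n) = 0 := by
      intro n
      simp only [hu_def]
      rw [_root_.map_smul, smul_eq_mul, hτN (m n) (hmN n), mul_zero]
    have hτu0' : Tendsto (fun n => τ (u n)) atTop (𝓝 0) := by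
      refine Tendsto.congr ?_ tendsto_const_nhds
      exact fun n => (hτu0 n).symm
    have : (1:ℝ) = 0 := tendsto_nhds_unique hτu hτu0'
    norm_num at this
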